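/- arXiv:0712.4266 — 6 statements merged into one kernel-verified Lean document; each statement's English description precedes it below -/
import Mathlib

section
/- Let 0 < δ ≤ g₀ and let g : (0,∞) → (0,∞) be differentiable with δ ≤ t g'(t)/g(t) ≤ g₀ for all t > 0, and let G(t) = ∫₀^t g(τ) dτ. Then G is convex on [0,∞) and for every t ≥ 0 one has t·g(t)/(1+g₀) ≤ G(t) ≤ t·g(t) (where g(0) is interpreted as the limit 0 of g at 0). -/
open Set MeasureTheory intervalIntegral

/-- Under the Lieberman condition, `G(t) = ∫₀^t g` is convex on `[0,∞)` and
`t g(t)/(1+g₀) ≤ G(t) ≤ t g(t)` for all `t ≥ 0` (with `g(0) = 0`, the limit of `g` at `0`). -/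
theorem G_convex_and_bounds
    (δ g₀ : ℝ) (hδ : 0 < δ) (hδg₀ : δ ≤ g₀)
    (g g' : ℝ → ℝ)
    (hg0 : g 0 = 0)
    (hpos : ∀ t > 0, 0 < g t)
    (hderiv : ∀ t > 0, HasDerivAt g (g' t) t)
    (hlieb : ∀ t > 0, δ ≤ t * g' t / g t ∧ t * g' t / g t ≤ g₀)
    (G : ℝ → ℝ) (hG : ∀ t, G t = ∫ τ in (0:ℝ)..t, g τ) :
    ConvexOn ℝ (Set.Ici 0) G ∧
    ∀ t ≥ (0:ℝ), t * g t / (1 + g₀) ≤ G t ∧ G t ≤ t * g t := by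
  have hGfun : G = fun t => ∫ τ in (0:ℝ)..t, g τ := funext hG
  have hg₀pos : (0:ℝ) < 1 + g₀ := by linarith
  -- g' is positive on (0,∞)
  have hg'pos : ∀ t > 0, 0 < g' t := by
    intro t ht
    have h1 := (hlieb t ht).1
    have h2 := hpos t ht
    have h1' : δ * g t ≤ t * g' t := (le_div_iff₀ h2).mp h1
    nlinarith [mul_pos hδ h2]
  -- continuity of g on (0,∞)
  have hcontOn : ContinuousOn g (Ioi 0) := fun x hx =>
    (hderiv x hx).continuousAt.continuousWithinAt
  -- g is strictly monotone on (0,∞)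
  have hsm : StrictMonoOn g (Ioi 0) := by
    apply strictMonoOn_of_deriv_pos (convex_Ioi 0) hcontOn
    intro x hx
    rw [interior_Ioi] at hx
    rw [(hderiv x hx).deriv]
    exact hg'pos x hx
  -- g is monotone on [0,T]
  have hmonoIcc : ∀ T : ℝ, MonotoneOn g (Icc 0 T) := by
    intro T a ha b hb hab
    rcases eq_or_lt_of_le ha.1 with h0 | h0
    · rw [← h0, hg0]
      rcases eq_or_lt_of_le (h0 ▸ hab : (0:ℝ) ≤ b) with h1 | h1
      · rw [← h1, hg0]
      · exact (hpos b h1).le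
    · exact (hsm.monotoneOn) h0 (h0.trans_le hab) hab
  -- integrability
  have hint : ∀ T : ℝ, 0 ≤ T → IntervalIntegrable g MeasureTheory.volume 0 T := by
    intro T hT
    apply MonotoneOn.intervalIntegrable
    rw [uIcc_of_le hT]
    exact hmonoIcc T
  -- derivative of G on (0,∞)
  have hGderiv : ∀ x > 0, HasDerivAt G (g x) x := by
    intro x hx
    rw [hGfun]
    exact intervalIntegral.integral_hasDerivAt_right (hint x hx.le)
      (hcontOn.stronglyMeasurableAtFilter isOpen_Ioi x hx)
      (hderiv x hx).continuousAt
  -- continuity of G on [0,∞)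
  have hGcont : ContinuousOn G (Ici 0) := by
    intro x hx
    rcases eq_or_lt_of_le (mem_Ici.mp hx : (0:ℝ) ≤ x) with h0 | h0
    · -- continuity at 0
      have hC : ContinuousOn (fun t => ∫ τ in (0:ℝ)..t, g τ) (uIcc (0:ℝ) 1) :=
        intervalIntegral.continuousOn_primitive_interval' (hint 1 zero_le_one) left_mem_uIcc
      rw [hGfun]
      have h01 : uIcc (0:ℝ) 1 = Icc 0 1 := uIcc_of_le zero_le_one
      have hmem : Icc (0:ℝ) 1 ∈ nhdsWithin 0 (Ici 0) := by
        rw [← Ici_inter_Iic]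
        exact Filter.inter_mem self_mem_nhdsWithin
          (mem_nhdsWithin_of_mem_nhds (Iic_mem_nhds one_pos))
      have := hC 0 (by rw [h01]; exact ⟨le_rfl, zero_le_one⟩)
      rw [h01] at this
      rw [← h0]
      exact ContinuousWithinAt.mono_of_mem_nhdsWithin this hmem
    · exact (hGderiv x h0).continuousAt.continuousWithinAt
  -- convexity
  have hconv : ConvexOn ℝ (Ici 0) G := by
    apply MonotoneOn.convexOn_of_deriv (convex_Ici 0) hGcont
    · intro x hx
      rw [interior_Ici] at hx
      exact (hGderiv x hx).differentiableAt.differentiableWithinAt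
    · intro a ha b hb hab
      rw [interior_Ici] at ha hb
      rw [(hGderiv a ha).deriv, (hGderiv b hb).deriv]
      exact (hsm.monotoneOn) ha hb hab
  refine ⟨hconv, fun t ht => ?_⟩
  rcases eq_or_lt_of_le ht with h0 | h0
  · rw [← h0, hg0, hG]
    simp
  -- nonnegativity of G on [0,t]
  have hGnonneg : ∀ s, 0 ≤ s → s ≤ t → 0 ≤ G s := by
    intro s hs hst
    rw [hG]
    apply intervalIntegral.integral_nonneg hs
    intro u hu
    rcases eq_or_lt_of_le hu.1 with h | h
    · rw [← h, hg0]
    · exact (hpos u h).le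
  constructor
  · -- lower bound via H s = (1+g₀) G s - s * g s
    set H : ℝ → ℝ := fun s => (1 + g₀) * G s - s * g s with hHdef
    have hHderiv : ∀ x > 0, HasDerivAt H ((1 + g₀) * g x - (1 * g x + x * g' x)) x := by
      intro x hx
      exact ((hGderiv x hx).const_mul _).sub ((hasDerivAt_id x).mul (hderiv x hx))
    have hHderiv_nonneg : ∀ x > 0, 0 ≤ (1 + g₀) * g x - (1 * g x + x * g' x) := by
      intro x hx
      have h2 := (hlieb x hx).2
      have hgx := hpos x hx
      have : x * g' x ≤ g₀ * g x := by
        rw [div_le_iff₀ hgx] at h2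
        linarith
      nlinarith
    -- H is monotone on [ε, t] for 0 < ε
    have hHmono : ∀ ε : ℝ, 0 < ε → ε ≤ t → H ε ≤ H t := by
      intro ε hε hεt
      have hmono : MonotoneOn H (Icc ε t) := by
        apply monotoneOn_of_deriv_nonneg (convex_Icc ε t)
        · intro x hx
          exact (hHderiv x (lt_of_lt_of_le hε hx.1)).continuousAt.continuousWithinAt
        · intro x hx
          rw [interior_Icc] at hx
          exact (hHderiv x (hε.trans hx.1)).differentiableAt.differentiableWithinAt
        · intro x hx
          rw [interior_Icc] at hx
          have hx0 : 0 < x := hε.trans hx.1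
          rw [(hHderiv x hx0).deriv]
          exact hHderiv_nonneg x hx0
      exact hmono ⟨le_rfl, hεt⟩ ⟨hεt, le_rfl⟩ hεt
    -- H t ≥ -ε g t for all ε ∈ (0, t]
    have key : ∀ ε : ℝ, 0 < ε → ε ≤ t → -(ε * g t) ≤ H t := by
      intro ε hε hεt
      have h1 := hHmono ε hε hεt
      have h2 : 0 ≤ G ε := hGnonneg ε hε.le hεt
      have h3 : g ε ≤ g t := by
        rcases eq_or_lt_of_le hεt with h | h
        · rw [h]
        · exact (hsm (mem_Ioi.mpr hε) (mem_Ioi.mpr h0) h).le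
      have h4 : 0 < g ε := hpos ε hε
      have h5 : -(ε * g t) ≤ (1 + g₀) * G ε - ε * g ε := by nlinarith
      have hHε : H ε = (1 + g₀) * G ε - ε * g ε := rfl
      linarith
    have h0H : 0 ≤ H t := by
      have htend : Filter.Tendsto (fun ε : ℝ => -(ε * g t)) (nhdsWithin 0 (Ioi 0)) (nhds 0) := by
        have : Filter.Tendsto (fun ε : ℝ => -(ε * g t)) (nhds 0) (nhds (-(0 * g t))) :=
          ((continuous_id.mul continuous_const).neg).tendsto 0
        simpa using this.mono_left nhdsWithin_le_nhds
      refine le_of_tendsto htend ?_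
      filter_upwards [Ioc_mem_nhdsGT_of_mem ⟨le_rfl, h0⟩] with ε hε
      exact key ε hε.1 hε.2
    have hHt : H t = (1 + g₀) * G t - t * g t := rfl
    rw [div_le_iff₀ hg₀pos]
    nlinarith [h0H, hHt]
  · -- upper bound
    rw [hG]
    have : (t : ℝ) * g t = ∫ _ in (0:ℝ)..t, g t := by
      rw [intervalIntegral.integral_const, smul_eq_mul, sub_zero]
    rw [this]
    apply intervalIntegral.integral_mono_on h0.le (hint t h0.le)
      (intervalIntegrable_const)
    intro u hu
    exact hmonoIcc t hu ⟨h0.le, le_rfl⟩ hu.2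
end

section
/- Let a, b > 0 and c ≥ 1, and define g(t) = t^a · log(b t + c) for t > 0. Then g maps (0,∞) into (0,∞), is differentiable, and satisfies a ≤ t g'(t)/g(t) ≤ a + 1 for all t > 0; i.e., g satisfies the Lieberman condition with constants δ = a and g₀ = a + 1. -/
/-- For `a, b > 0`, `c ≥ 1`, the function `g(t) = t^a log(b t + c)` maps
`(0,∞)` into `(0,∞)`, is differentiable, and satisfies the Lieberman condition
`a ≤ t g'(t)/g(t) ≤ a + 1` for all `t > 0`. -/
theorem power_log_satisfies_lieberman
    (a b c : ℝ) (ha : 0 < a) (hb : 0 < b) (hc : 1 ≤ c) :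
    ∀ t > (0:ℝ),
      0 < t ^ a * Real.log (b * t + c) ∧
      DifferentiableAt ℝ (fun t : ℝ => t ^ a * Real.log (b * t + c)) t ∧
      a ≤ t * deriv (fun t : ℝ => t ^ a * Real.log (b * t + c)) t /
            (t ^ a * Real.log (b * t + c)) ∧
      t * deriv (fun t : ℝ => t ^ a * Real.log (b * t + c)) t /
            (t ^ a * Real.log (b * t + c)) ≤ a + 1 := by
  intro t ht
  have hbt : 0 < b * t := mul_pos hb ht
  have hx : (1:ℝ) < b * t + c := by linarith
  have hx0 : (0:ℝ) < b * t + c := by linarith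
  have hxne : b * t + c ≠ 0 := ne_of_gt hx0
  have hL : 0 < Real.log (b * t + c) := Real.log_pos hx
  have hLne : Real.log (b * t + c) ≠ 0 := ne_of_gt hL
  have htne : t ≠ 0 := ne_of_gt ht
  have hta : 0 < t ^ a := Real.rpow_pos_of_pos ht a
  have htane : t ^ a ≠ 0 := ne_of_gt hta
  have hpos : 0 < t ^ a * Real.log (b * t + c) := mul_pos hta hL
  -- derivative
  have h1 : HasDerivAt (fun x : ℝ => x ^ a) (a * t ^ (a - 1)) t :=
    Real.hasDerivAt_rpow_const (Or.inl htne)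
  have h2 : HasDerivAt (fun x : ℝ => Real.log (b * x + c)) (b / (b * t + c)) t := by
    have hlin : HasDerivAt (fun x : ℝ => b * x + c) b t := by
      simpa using ((hasDerivAt_id t).const_mul b).add_const c
    have := (Real.hasDerivAt_log hxne).comp t hlin
    simpa [div_eq_inv_mul, mul_comm, Function.comp_def] using this
  have hg : HasDerivAt (fun x : ℝ => x ^ a * Real.log (b * x + c))
      (a * t ^ (a - 1) * Real.log (b * t + c) + t ^ a * (b / (b * t + c))) t := h1.mul h2
  have hderiv : deriv (fun x : ℝ => x ^ a * Real.log (b * x + c)) t =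
      a * t ^ (a - 1) * Real.log (b * t + c) + t ^ a * (b / (b * t + c)) := hg.deriv
  have hrw : t ^ (a - 1) = t ^ a / t := by
    rw [Real.rpow_sub ht, Real.rpow_one]
  have key : t * deriv (fun x : ℝ => x ^ a * Real.log (b * x + c)) t /
      (t ^ a * Real.log (b * t + c)) =
      a + b * t / ((b * t + c) * Real.log (b * t + c)) := by
    rw [hderiv, hrw]
    field_simp
    have hL' : Real.log (t * b + c) ≠ 0 := by rwa [mul_comm t b]
    rw [add_div, mul_div_cancel_right₀ _ hL']
  refine ⟨hpos, hg.differentiableAt, ?_, ?_⟩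
  · rw [key]
    have : 0 ≤ b * t / ((b * t + c) * Real.log (b * t + c)) :=
      div_nonneg (le_of_lt hbt) (le_of_lt (mul_pos hx0 hL))
    linarith
  · rw [key]
    have hlog : 1 - (b * t + c)⁻¹ ≤ Real.log (b * t + c) :=
      Real.one_sub_inv_le_log_of_pos hx0
    have hbound : b * t ≤ (b * t + c) * Real.log (b * t + c) := by
      have h1 : (b * t + c) * (1 - (b * t + c)⁻¹) ≤
          (b * t + c) * Real.log (b * t + c) :=
        mul_le_mul_of_nonneg_left hlog (le_of_lt hx0)
      have h2 : (b * t + c) * (1 - (b * t + c)⁻¹) = b * t + c - 1 := by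
        field_simp
      nlinarith
    have : b * t / ((b * t + c) * Real.log (b * t + c)) ≤ 1 :=
      (div_le_one (mul_pos hx0 hL)).mpr hbound
    linarith
end

section
/- Let a₁, a₂, c₁, s > 0 and set c₂ = (a₁ c₁ / a₂) · s^{a₁ − a₂} and d = c₁ s^{a₁} − c₂ s^{a₂}. Define g(t) = c₁ t^{a₁} for 0 < t ≤ s and g(t) = c₂ t^{a₂} + d for t > s. Then g maps (0,∞) into (0,∞), is continuously differentiable on (0,∞), and satisfies min(a₁,a₂) ≤ t g'(t)/g(t) ≤ max(a₁,a₂) for all t > 0; i.e., g satisfies the Lieberman condition with constants δ = min(a₁,a₂) and g₀ = max(a₁,a₂). -/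
open Real Set

/-- The piecewise function `g(t) = c₁ t^{a₁}` for `0 < t ≤ s`,
`g(t) = c₂ t^{a₂} + d` for `t > s` (with `c₂, d` chosen so that `g` is `C¹`)
maps `(0,∞)` into `(0,∞)`, is `C¹` on `(0,∞)`, and satisfies the Lieberman condition
with constants `min(a₁,a₂)` and `max(a₁,a₂)`. -/
theorem piecewise_power_satisfies_lieberman
    (a₁ a₂ c₁ s : ℝ) (ha₁ : 0 < a₁) (ha₂ : 0 < a₂) (hc₁ : 0 < c₁) (hs : 0 < s)
    (c₂ d : ℝ)
    (hc₂ : c₂ = a₁ * c₁ / a₂ * s ^ (a₁ - a₂))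
    (hd : d = c₁ * s ^ a₁ - c₂ * s ^ a₂)
    (g : ℝ → ℝ)
    (hg : ∀ t, g t = if t ≤ s then c₁ * t ^ a₁ else c₂ * t ^ a₂ + d) :
    (∀ t > (0:ℝ), 0 < g t) ∧
    ContDiffOn ℝ 1 g (Set.Ioi 0) ∧
    ∀ t > (0:ℝ), min a₁ a₂ ≤ t * deriv g t / g t ∧ t * deriv g t / g t ≤ max a₁ a₂ := by
  have hc₂pos : 0 < c₂ := by
    rw [hc₂]
    positivity
  -- value match at s
  have hval : c₂ * s ^ a₂ + d = c₁ * s ^ a₁ := by rw [hd]; ring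
  -- derivative match at s
  have hkey : a₂ * c₂ * s ^ (a₂ - 1) = a₁ * c₁ * s ^ (a₁ - 1) := by
    rw [hc₂]
    rw [show a₂ * (a₁ * c₁ / a₂ * s ^ (a₁ - a₂)) * s ^ (a₂ - 1)
        = a₁ * c₁ * (a₂ / a₂) * (s ^ (a₁ - a₂) * s ^ (a₂ - 1)) by ring,
      div_self ha₂.ne', ← Real.rpow_add hs]
    ring_nf
  set G : ℝ → ℝ := fun t => if t ≤ s then a₁ * c₁ * t ^ (a₁ - 1)
      else a₂ * c₂ * t ^ (a₂ - 1) with hGdef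
  have hd1 : ∀ t : ℝ, t ≠ 0 →
      HasDerivAt (fun u : ℝ => c₁ * u ^ a₁) (a₁ * c₁ * t ^ (a₁ - 1)) t := by
    intro t ht
    have := (Real.hasDerivAt_rpow_const (p := a₁) (Or.inl ht)).const_mul c₁
    exact this.congr_deriv (by ring)
  have hd2 : ∀ t : ℝ, t ≠ 0 →
      HasDerivAt (fun u : ℝ => c₂ * u ^ a₂ + d) (a₂ * c₂ * t ^ (a₂ - 1)) t := by
    intro t ht
    have := ((Real.hasDerivAt_rpow_const (p := a₂) (Or.inl ht)).const_mul c₂).add_const d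
    exact this.congr_deriv (by ring)
  have hG : ∀ t ∈ Ioi (0:ℝ), HasDerivAt g (G t) t := by
    intro t ht
    simp only [mem_Ioi] at ht
    rcases lt_trichotomy t s with h | h | h
    · have heq : g =ᶠ[nhds t] fun u => c₁ * u ^ a₁ := by
        filter_upwards [Iio_mem_nhds h] with u hu
        rw [hg]; simp [le_of_lt hu.out]
      have : G t = a₁ * c₁ * t ^ (a₁ - 1) := by simp [hGdef, le_of_lt h]
      rw [this]
      exact (hd1 t ht.ne').congr_of_eventuallyEq heq
    · subst h
      have w₁ : HasDerivWithinAt g (a₁ * c₁ * t ^ (a₁ - 1)) (Iic t) t := by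
        refine ((hd1 t ht.ne').hasDerivWithinAt).congr ?_ ?_
        · intro u hu; rw [hg]; simp [hu.out]
        · rw [hg]; simp
      have w₂ : HasDerivWithinAt g (a₁ * c₁ * t ^ (a₁ - 1)) (Ici t) t := by
        rw [← hkey]
        refine ((hd2 t ht.ne').hasDerivWithinAt).congr ?_ ?_
        · intro u hu
          rcases hu.out.lt_or_eq with h | h
          · rw [hg, if_neg (not_le.2 h)]
          · rw [← h, hg, if_pos le_rfl, hval]
        · rw [hg, if_pos le_rfl, hval]
      have := w₁.union w₂
      rw [Iic_union_Ici, hasDerivWithinAt_univ] at this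
      have hGt : G t = a₁ * c₁ * t ^ (a₁ - 1) := by simp [hGdef]
      rw [hGt]; exact this
    · have heq : g =ᶠ[nhds t] fun u => c₂ * u ^ a₂ + d := by
        filter_upwards [Ioi_mem_nhds h] with u hu
        rw [hg]; simp [not_le.2 hu.out]
      have : G t = a₂ * c₂ * t ^ (a₂ - 1) := by simp [hGdef, not_le.2 h]
      rw [this]
      exact (hd2 t ht.ne').congr_of_eventuallyEq heq
  -- continuity of G on Ioi 0
  have hGcont : ContinuousOn G (Ioi 0) := by
    intro t ht
    simp only [mem_Ioi] at ht
    rcases lt_trichotomy t s with h | h | h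
    · have : ContinuousAt G t := by
        have hc : ContinuousAt (fun u : ℝ => a₁ * c₁ * u ^ (a₁ - 1)) t :=
          (Real.continuousAt_rpow_const t _ (Or.inl ht.ne')).const_mul _
        refine hc.congr ?_
        filter_upwards [Iio_mem_nhds h] with u hu
        simp [hGdef, le_of_lt hu.out]
      exact this.continuousWithinAt
    · subst h
      have w₁ : ContinuousWithinAt G (Iic t) t := by
        have hca : ContinuousAt (fun u : ℝ => a₁ * c₁ * u ^ (a₁ - 1)) t :=
          (Real.continuousAt_rpow_const t _ (Or.inl ht.ne')).const_mul _
        have hc : ContinuousWithinAt (fun u : ℝ => a₁ * c₁ * u ^ (a₁ - 1)) (Iic t) t :=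
          hca.continuousWithinAt
        refine hc.congr ?_ ?_
        · intro u hu; simp [hGdef, hu.out]
        · simp [hGdef]
      have w₂ : ContinuousWithinAt G (Ici t) t := by
        have hca : ContinuousAt (fun u : ℝ => a₂ * c₂ * u ^ (a₂ - 1)) t :=
          (Real.continuousAt_rpow_const t _ (Or.inl ht.ne')).const_mul _
        have hc : ContinuousWithinAt (fun u : ℝ => a₂ * c₂ * u ^ (a₂ - 1)) (Ici t) t :=
          hca.continuousWithinAt
        refine hc.congr ?_ ?_
        · intro u hu
          rcases hu.out.lt_or_eq with h | h
          · simp [hGdef, not_le.2 h]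
          · rw [← h]; simp [hGdef, hkey]
        · simp [hGdef, hkey]
      have := w₁.union w₂
      rw [Iic_union_Ici] at this
      exact this.mono (subset_univ _)
    · have : ContinuousAt G t := by
        have hc : ContinuousAt (fun u : ℝ => a₂ * c₂ * u ^ (a₂ - 1)) t :=
          (Real.continuousAt_rpow_const t _ (Or.inl ht.ne')).const_mul _
        refine hc.congr ?_
        filter_upwards [Ioi_mem_nhds h] with u hu
        simp [hGdef, not_le.2 hu.out]
      exact this.continuousWithinAt
  have hderiv : ∀ t ∈ Ioi (0:ℝ), deriv g t = G t := fun t ht => (hG t ht).deriv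
  refine ⟨?_, ?_, ?_⟩
  · -- positivity
    intro t ht
    rw [hg]
    split_ifs with h
    · positivity
    · push_neg at h
      have h1 : s ^ a₂ < t ^ a₂ := Real.rpow_lt_rpow hs.le h ha₂
      have h2 : 0 < c₁ * s ^ a₁ := by positivity
      nlinarith
  · -- C¹
    rw [show (1 : WithTop ℕ∞) = 0 + 1 by rfl, contDiffOn_succ_iff_deriv_of_isOpen isOpen_Ioi]
    refine ⟨fun t ht => (hG t ht).differentiableAt.differentiableWithinAt, ?_, ?_⟩
    · intro h; exact absurd h (by simp)
    · rw [contDiffOn_zero]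
      exact hGcont.congr hderiv
  · -- Lieberman bounds
    intro t ht
    have ht' : (0:ℝ) < t := ht
    rw [hderiv t ht, hg]
    have htpow : ∀ a : ℝ, t * (t ^ (a - 1)) = t ^ a := by
      intro a
      rw [show a = (a - 1) + 1 by ring, Real.rpow_add ht', Real.rpow_one]
      ring_nf
    simp only [hGdef]
    split_ifs with h
    · -- t ≤ s : ratio = a₁
      have hratio : t * (a₁ * c₁ * t ^ (a₁ - 1)) / (c₁ * t ^ a₁) = a₁ := by
        rw [show t * (a₁ * c₁ * t ^ (a₁ - 1)) = a₁ * c₁ * (t * t ^ (a₁ - 1)) by ring,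
          htpow a₁]
        have : c₁ * t ^ a₁ ≠ 0 := by positivity
        field_simp
      rw [hratio]
      exact ⟨min_le_left _ _, le_max_left _ _⟩
    · -- t > s
      push_neg at h
      have hx : c₂ * s ^ a₂ ≤ c₂ * t ^ a₂ :=
        mul_le_mul_of_nonneg_left (Real.rpow_le_rpow hs.le h.le ha₂.le) hc₂pos.le
      set x := c₂ * t ^ a₂ with hxdef
      set x₀ := c₂ * s ^ a₂ with hx₀def
      have hx₀pos : 0 < x₀ := by positivity
      have hden : 0 < x + d := by
        have : x + d = (x - x₀) + c₁ * s ^ a₁ := by rw [hd]; ring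
        rw [this]
        have : (0:ℝ) < c₁ * s ^ a₁ := by positivity
        linarith
      have had : a₁ * d = (a₂ - a₁) * x₀ := by
        have h1 : a₂ * x₀ = a₁ * (c₁ * s ^ a₁) := by
          rw [hx₀def, hc₂, show a₂ * (a₁ * c₁ / a₂ * s ^ (a₁ - a₂) * s ^ a₂)
            = a₁ * c₁ * (a₂ / a₂) * (s ^ (a₁ - a₂) * s ^ a₂) by ring,
            div_self ha₂.ne', ← Real.rpow_add hs]
          ring_nf
        rw [hd]; nlinarith
      have hratio : t * (a₂ * c₂ * t ^ (a₂ - 1)) / (c₂ * t ^ a₂ + d)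
          = a₂ * x / (x + d) := by
        rw [show t * (a₂ * c₂ * t ^ (a₂ - 1)) = a₂ * (c₂ * (t * t ^ (a₂ - 1))) by ring,
          htpow a₂, hxdef]
      rw [hratio]
      rcases le_total a₁ a₂ with hle | hle
      · have hd0 : 0 ≤ d := by nlinarith [mul_nonneg (sub_nonneg.2 hle) hx₀pos.le]
        constructor
        · rw [min_eq_left hle, le_div_iff₀ hden]
          nlinarith [mul_nonneg (sub_nonneg.2 hle) (sub_nonneg.2 hx)]
        · rw [max_eq_right hle, div_le_iff₀ hden]
          nlinarith [mul_nonneg ha₂.le hd0]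
      · have hd0 : d ≤ 0 := by nlinarith [mul_nonneg (sub_nonneg.2 hle) hx₀pos.le]
        constructor
        · rw [min_eq_right hle, le_div_iff₀ hden]
          nlinarith [mul_nonpos_of_nonneg_of_nonpos ha₂.le hd0]
        · rw [max_eq_left hle, div_le_iff₀ hden]
          nlinarith [mul_nonneg (sub_nonneg.2 hle) (sub_nonneg.2 hx)]
end

section
/- Let 0 < δ ≤ g₀ and let g : (0,∞) → (0,∞) be differentiable with δ ≤ t g'(t)/g(t) ≤ g₀ for all t > 0. Then for every t > 0 and every s ≥ 1 one has s² · g'(t s) ≥ (δ/g₀) · s · g'(t). -/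
/-- Under the Lieberman condition, for every `t > 0` and `s ≥ 1` one has
`s² g'(t s) ≥ (δ/g₀) s g'(t)`. -/
theorem lieberman_derivative_scaling
    (δ g₀ : ℝ) (hδ : 0 < δ) (hδg₀ : δ ≤ g₀)
    (g g' : ℝ → ℝ)
    (hpos : ∀ t > 0, 0 < g t)
    (hderiv : ∀ t > 0, HasDerivAt g (g' t) t)
    (hlieb : ∀ t > 0, δ ≤ t * g' t / g t ∧ t * g' t / g t ≤ g₀) :
    ∀ t > (0:ℝ), ∀ s ≥ (1:ℝ), δ / g₀ * (s * g' t) ≤ s ^ 2 * g' (t * s) := by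
  have hg₀ : 0 < g₀ := lt_of_lt_of_le hδ hδg₀
  -- g is monotone on (0,∞)
  have hmono : StrictMonoOn g (Set.Ioi (0:ℝ)) := by
    apply strictMonoOn_of_deriv_pos (convex_Ioi 0)
    · intro x hx
      exact (hderiv x hx).continuousAt.continuousWithinAt
    · intro x hx
      rw [interior_Ioi] at hx
      rw [(hderiv x hx).deriv]
      have h1 := (hlieb x hx).1
      have hgx := hpos x hx
      rw [le_div_iff₀ hgx] at h1
      have hx' : (0:ℝ) < x := hx
      nlinarith [mul_pos hδ hgx]
  intro t ht s hs
  have hts : 0 < t * s := mul_pos ht (lt_of_lt_of_le one_pos hs)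
  have hgt := hpos t ht
  have hgts := hpos (t * s) hts
  have h1 : δ * g t ≤ t * g' t := by
    have := (hlieb t ht).1
    rw [le_div_iff₀ hgt] at this; linarith
  have h2 : t * g' t ≤ g₀ * g t := by
    have := (hlieb t ht).2
    rw [div_le_iff₀ hgt] at this; linarith
  have h3 : δ * g (t * s) ≤ (t * s) * g' (t * s) := by
    have := (hlieb (t * s) hts).1
    rw [le_div_iff₀ hgts] at this; linarith
  have h4 : g t ≤ g (t * s) := by
    rcases eq_or_lt_of_le hs with h | h
    · rw [← h, mul_one]
    · exact le_of_lt (hmono (Set.mem_Ioi.mpr ht) (Set.mem_Ioi.mpr hts)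
        (by nlinarith))
  have hs1 : (1:ℝ) ≤ s := hs
  rw [div_mul_eq_mul_div, div_le_iff₀ hg₀]
  -- δ * (s * g' t) ≤ s^2 * g' (t*s) * g₀
  have key1 : δ * (t * g' t) ≤ δ * (g₀ * g t) := by nlinarith
  have key2 : δ * g t ≤ (t * s) * g' (t * s) := le_trans (by nlinarith) h3
  nlinarith [mul_le_mul_of_nonneg_left key2 (le_of_lt hg₀),
    mul_le_mul_of_nonneg_left h2 (le_of_lt hδ), mul_pos ht (hpos t ht),
    mul_le_mul_of_nonneg_left key2 (mul_nonneg hg₀.le (by linarith : (0:ℝ) ≤ s - 1))]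
end

section
/- Let 0 < δ ≤ g₀ and let g : (0,∞) → (0,∞) be differentiable with δ ≤ t g'(t)/g(t) ≤ g₀ for all t > 0. Define G(t) = ∫₀^t g(τ) dτ and Φ(t) = t·g(t) − G(t). Then Φ is strictly increasing on (0,∞) and for every t > 0 one has (δ/(1+δ)) · t·g(t) ≤ Φ(t) ≤ (g₀/(1+g₀)) · t·g(t). -/
open MeasureTheory Filter Set

/-- Auxiliary: a function with nonnegative derivative on `(0,∞)` tending to `0` at `0⁺`
is nonnegative on `(0,∞)`. -/
lemma aux_nonneg_of_deriv (F F' : ℝ → ℝ)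
    (hd : ∀ t > (0:ℝ), HasDerivAt F (F' t) t)
    (hd0 : ∀ t > (0:ℝ), 0 ≤ F' t)
    (hlim : Tendsto F (nhdsWithin 0 (Set.Ioi 0)) (nhds 0)) :
    ∀ t > (0:ℝ), 0 ≤ F t := by
  have mono : MonotoneOn F (Set.Ioi 0) := by
    apply monotoneOn_of_deriv_nonneg (convex_Ioi 0)
      (fun t ht => (hd t ht).continuousAt.continuousWithinAt)
    · intro t ht
      rw [interior_Ioi] at ht
      exact (hd t ht).differentiableAt.differentiableWithinAt
    · intro t ht
      rw [interior_Ioi] at ht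
      rw [(hd t ht).deriv]
      exact hd0 t ht
  intro t ht
  refine le_of_tendsto hlim ?_
  filter_upwards [Ioc_mem_nhdsGT_of_mem (Set.mem_Ico.mpr ⟨le_refl 0, ht⟩)] with s hs
  exact mono hs.1 ht hs.2

/-- Under the Lieberman condition, `Φ(t) = t g(t) − G(t)` is strictly
increasing on `(0,∞)` and `(δ/(1+δ)) t g(t) ≤ Φ(t) ≤ (g₀/(1+g₀)) t g(t)` for `t > 0`. -/
theorem Phi_strictMono_and_bounds
    (δ g₀ : ℝ) (hδ : 0 < δ) (hδg₀ : δ ≤ g₀)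
    (g g' : ℝ → ℝ)
    (hpos : ∀ t > 0, 0 < g t)
    (hderiv : ∀ t > 0, HasDerivAt g (g' t) t)
    (hlieb : ∀ t > 0, δ ≤ t * g' t / g t ∧ t * g' t / g t ≤ g₀)
    (G Φ : ℝ → ℝ)
    (hG : ∀ t, G t = ∫ τ in (0:ℝ)..t, g τ)
    (hΦ : ∀ t, Φ t = t * g t - G t) :
    StrictMonoOn Φ (Set.Ioi 0) ∧
    ∀ t > (0:ℝ), δ / (1 + δ) * (t * g t) ≤ Φ t ∧ Φ t ≤ g₀ / (1 + g₀) * (t * g t) := by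
  have g₀pos : 0 < g₀ := lt_of_lt_of_le hδ hδg₀
  have hcont : ContinuousOn g (Set.Ioi 0) :=
    fun t ht => (hderiv t ht).continuousAt.continuousWithinAt
  -- key inequalities
  have key₁ : ∀ t > (0:ℝ), δ * g t ≤ t * g' t := by
    intro t ht
    have := (hlieb t ht).1
    rw [le_div_iff₀ (hpos t ht)] at this
    exact this
  have key₂ : ∀ t > (0:ℝ), t * g' t ≤ g₀ * g t := by
    intro t ht
    have := (hlieb t ht).2
    rw [div_le_iff₀ (hpos t ht)] at this
    exact this
  -- g is monotone on (0,∞)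
  have gmono : MonotoneOn g (Set.Ioi 0) := by
    apply monotoneOn_of_deriv_nonneg (convex_Ioi 0) hcont
    · intro t ht
      rw [interior_Ioi] at ht
      exact (hderiv t ht).differentiableAt.differentiableWithinAt
    · intro t ht
      rw [interior_Ioi] at ht
      rw [(hderiv t ht).deriv]
      nlinarith [key₁ t ht, hpos t ht, Set.mem_Ioi.mp ht]
  -- integrability of g on (0, t)
  have hint : ∀ t > (0:ℝ), IntervalIntegrable g volume 0 t := by
    intro t ht
    rw [intervalIntegrable_iff_integrableOn_Ioc_of_le (le_of_lt ht)]
    apply Integrable.mono' (integrableOn_const (C := g t) measure_Ioc_lt_top.ne)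
    · exact (hcont.mono Set.Ioc_subset_Ioi_self).aestronglyMeasurable measurableSet_Ioc
    · filter_upwards [ae_restrict_mem measurableSet_Ioc] with x hx
      rw [Real.norm_eq_abs, abs_of_pos (hpos x hx.1)]
      exact gmono hx.1 ht hx.2
  -- integrability on subintervals of (0,∞)
  have hint' : ∀ a > (0:ℝ), ∀ b > (0:ℝ), IntervalIntegrable g volume a b := by
    intro a ha b hb
    apply ContinuousOn.intervalIntegrable
    apply hcont.mono
    intro x hx
    exact lt_of_lt_of_le (lt_min ha hb) hx.1
  -- G is differentiable with derivative g on (0,∞)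
  have hGderiv : ∀ s > (0:ℝ), HasDerivAt G (g s) s := by
    intro s hs
    have ha : (0:ℝ) < s / 2 := by positivity
    have hF : HasDerivAt (fun t => (∫ τ in (0:ℝ)..(s/2), g τ) + ∫ τ in (s/2)..t, g τ)
        (g s) s := by
      apply HasDerivAt.const_add
      apply intervalIntegral.integral_hasDerivAt_right (hint' _ ha _ hs)
      · exact ⟨Set.Ioi 0, Ioi_mem_nhds hs, hcont.aestronglyMeasurable measurableSet_Ioi⟩
      · exact (hderiv s hs).continuousAt
    apply hF.congr_of_eventuallyEq
    filter_upwards [Ioi_mem_nhds hs] with t ht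
    rw [hG t, ← intervalIntegral.integral_add_adjacent_intervals (hint _ ha) (hint' _ ha _ ht)]
  -- Φ has derivative t g'(t) on (0,∞)
  have hΦeq : Φ = fun t => t * g t - G t := funext hΦ
  have hΦderiv : ∀ t > (0:ℝ), HasDerivAt Φ (t * g' t) t := by
    intro t ht
    have h1 : HasDerivAt (fun t => t * g t - G t) (1 * g t + t * g' t - g t) t :=
      ((hasDerivAt_id t).mul (hderiv t ht)).sub (hGderiv t ht)
    rw [hΦeq]
    convert h1 using 1
    ring
  -- limits at 0⁺
  have hg1bd : ∀ t ∈ Set.Ioc (0:ℝ) 1, g t ≤ g 1 := fun t ht => gmono ht.1 (Set.mem_Ioi.mpr one_pos) ht.2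
  have hlim_tg : Tendsto (fun t => t * g t) (nhdsWithin 0 (Set.Ioi 0)) (nhds 0) := by
    have hbig : Tendsto (fun t : ℝ => t * g 1) (nhdsWithin 0 (Set.Ioi 0)) (nhds 0) := by
      have h : Continuous (fun t : ℝ => t * g 1) := continuous_id.mul continuous_const
      simpa using (h.tendsto 0).mono_left (nhdsWithin_le_nhds (s := Set.Ioi (0:ℝ)))
    apply squeeze_zero' ?_ ?_ hbig
    · filter_upwards [Ioc_mem_nhdsGT_of_mem (Set.mem_Ico.mpr ⟨le_refl 0, one_pos⟩)] with t ht
      exact le_of_lt (mul_pos ht.1 (hpos t ht.1))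
    · filter_upwards [Ioc_mem_nhdsGT_of_mem (Set.mem_Ico.mpr ⟨le_refl 0, one_pos⟩)] with t ht
      exact mul_le_mul_of_nonneg_left (hg1bd t ht) (le_of_lt ht.1)
  have hlimG : Tendsto G (nhdsWithin 0 (Set.Ioi 0)) (nhds 0) := by
    have hbig : Tendsto (fun t : ℝ => g 1 * t) (nhdsWithin 0 (Set.Ioi 0)) (nhds 0) := by
      have h : Continuous (fun t : ℝ => g 1 * t) := continuous_const.mul continuous_id
      simpa using (h.tendsto 0).mono_left (nhdsWithin_le_nhds (s := Set.Ioi (0:ℝ)))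
    apply squeeze_zero_norm' ?_ hbig
    filter_upwards [Ioc_mem_nhdsGT_of_mem (Set.mem_Ico.mpr ⟨le_refl 0, one_pos⟩)] with t ht
    rw [hG t]
    have hb : ∀ x ∈ Set.uIoc (0:ℝ) t, ‖g x‖ ≤ g 1 := by
      intro x hx
      rw [Set.uIoc_of_le (le_of_lt ht.1)] at hx
      rw [Real.norm_eq_abs, abs_of_pos (hpos x hx.1)]
      exact hg1bd x ⟨hx.1, le_trans hx.2 ht.2⟩
    calc ‖∫ τ in (0:ℝ)..t, g τ‖ ≤ g 1 * |t - 0| :=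
          intervalIntegral.norm_integral_le_of_norm_le_const hb
      _ = g 1 * t := by rw [sub_zero, abs_of_pos ht.1]
  have hlimΦ : Tendsto Φ (nhdsWithin 0 (Set.Ioi 0)) (nhds 0) := by
    rw [hΦeq]
    simpa using hlim_tg.sub hlimG
  -- strict monotonicity
  have hmono : StrictMonoOn Φ (Set.Ioi 0) := by
    apply strictMonoOn_of_deriv_pos (convex_Ioi 0)
      (fun t ht => (hΦderiv t ht).continuousAt.continuousWithinAt)
    intro t ht
    rw [interior_Ioi] at ht
    rw [(hΦderiv t ht).deriv]
    nlinarith [key₁ t ht, hpos t ht]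
  refine ⟨hmono, fun t ht => ?_⟩
  -- lower bound
  have c1 : (0:ℝ) < 1 + δ := by linarith
  have c2 : (0:ℝ) < 1 + g₀ := by linarith
  have hlow : ∀ s > (0:ℝ), 0 ≤ Φ s - δ / (1 + δ) * (s * g s) := by
    apply aux_nonneg_of_deriv _ (fun s => s * g' s - δ / (1 + δ) * (1 * g s + s * g' s))
    · intro s hs
      exact (hΦderiv s hs).sub (((hasDerivAt_id s).mul (hderiv s hs)).const_mul _)
    · intro s hs
      have h1 := key₁ s hs
      rw [sub_nonneg, div_mul_eq_mul_div, div_le_iff₀ c1]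
      nlinarith
    · simpa using hlimΦ.sub (hlim_tg.const_mul (δ / (1 + δ)))
  have hhigh : ∀ s > (0:ℝ), 0 ≤ g₀ / (1 + g₀) * (s * g s) - Φ s := by
    apply aux_nonneg_of_deriv _ (fun s => g₀ / (1 + g₀) * (1 * g s + s * g' s) - s * g' s)
    · intro s hs
      exact ((((hasDerivAt_id s).mul (hderiv s hs)).const_mul _)).sub (hΦderiv s hs)
    · intro s hs
      have h2 := key₂ s hs
      have h3 := hpos s hs
      rw [sub_nonneg, div_mul_eq_mul_div, le_div_iff₀ c2]
      nlinarith
    · simpa using (hlim_tg.const_mul (g₀ / (1 + g₀))).sub hlimΦ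
  exact ⟨by linarith [hlow t ht], by linarith [hhigh t ht]⟩
end

section
/- Let 1 ≤ g₀, let 0 < δ ≤ g₀, let g : (0,∞) → (0,∞) be differentiable with δ ≤ t g'(t)/g(t) ≤ g₀ for all t > 0, and let C₀ > 0. Then there exists a constant c > 0, depending only on g, g₀ and C₀, such that for all vectors a, b ∈ ℝ^N with ‖a‖ ≤ C₀, ‖b − a‖ ≤ C₀ and b ≠ a: (i) if ‖b − a‖ > 2‖a‖ then G(‖b − a‖) ≥ c·‖b − a‖^{g₀+1}; and (ii) if ‖b − a‖ ≤ 2‖a‖ (so a ≠ 0) then (g(‖a‖)/‖a‖)·‖b − a‖² ≥ c·‖b − a‖^{g₀+1}. -/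
open MeasureTheory Set


/-- Under the Lieberman condition with `g₀ ≥ 1`, for every `C₀ > 0` there
is `c > 0` (depending only on `g, g₀, C₀`) such that for all `a, b ∈ ℝ^N` with
`‖a‖ ≤ C₀`, `‖b − a‖ ≤ C₀`, `b ≠ a`: if `‖b − a‖ > 2‖a‖` then
`G(‖b − a‖) ≥ c ‖b − a‖^{g₀+1}`, and if `‖b − a‖ ≤ 2‖a‖` then
`(g(‖a‖)/‖a‖) ‖b − a‖² ≥ c ‖b − a‖^{g₀+1}`. -/
theorem gradient_convergence_pointwise_bound
    (N : ℕ) (δ g₀ : ℝ) (hg₀ : 1 ≤ g₀) (hδ : 0 < δ) (hδg₀ : δ ≤ g₀)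
    (g g' : ℝ → ℝ)
    (hpos : ∀ t > 0, 0 < g t)
    (hderiv : ∀ t > 0, HasDerivAt g (g' t) t)
    (hlieb : ∀ t > 0, δ ≤ t * g' t / g t ∧ t * g' t / g t ≤ g₀)
    (G : ℝ → ℝ) (hG : ∀ t, G t = ∫ τ in (0:ℝ)..t, g τ)
    (C₀ : ℝ) (hC₀ : 0 < C₀) :
    ∃ c > (0:ℝ), ∀ a b : EuclideanSpace ℝ (Fin N),
      ‖a‖ ≤ C₀ → ‖b - a‖ ≤ C₀ → b ≠ a →
      (2 * ‖a‖ < ‖b - a‖ → c * ‖b - a‖ ^ (g₀ + 1) ≤ G ‖b - a‖) ∧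
      (‖b - a‖ ≤ 2 * ‖a‖ → c * ‖b - a‖ ^ (g₀ + 1) ≤ g ‖a‖ / ‖a‖ * ‖b - a‖ ^ 2) := by
  -- g' is positive on (0,∞)
  have hg'pos : ∀ t > 0, 0 < g' t := by
    intro t ht
    have hgt := hpos t ht
    have h1 : 0 < t * g' t / g t := lt_of_lt_of_le hδ (hlieb t ht).1
    have h2 : 0 < t * g' t := by
      have := mul_pos h1 hgt
      rwa [div_mul_cancel₀ _ hgt.ne'] at this
    nlinarith
  -- g is monotone on (0,∞)
  have hmono : MonotoneOn g (Set.Ioi 0) := by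
    apply monotoneOn_of_deriv_nonneg (convex_Ioi 0)
    · intro x hx; exact (hderiv x hx).continuousAt.continuousWithinAt
    · intro x hx; rw [interior_Ioi] at hx
      exact (hderiv x hx).differentiableAt.differentiableWithinAt
    · intro x hx; rw [interior_Ioi] at hx
      rw [(hderiv x hx).deriv]; exact (hg'pos x hx).le
  -- the function g(u) u^{-g₀} is antitone on (0,∞)
  have hψderiv : ∀ u > (0:ℝ), HasDerivAt (fun u => g u * u ^ (-g₀))
      (g' u * u ^ (-g₀) + g u * (-g₀ * u ^ (-g₀ - 1))) u := by
    intro u hu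
    exact (hderiv u hu).mul (Real.hasDerivAt_rpow_const (Or.inl hu.ne'))
  have hψanti : AntitoneOn (fun u => g u * u ^ (-g₀)) (Set.Ioi 0) := by
    apply antitoneOn_of_deriv_nonpos (convex_Ioi 0)
    · intro x hx; exact (hψderiv x hx).continuousAt.continuousWithinAt
    · intro x hx; rw [interior_Ioi] at hx
      exact (hψderiv x hx).differentiableAt.differentiableWithinAt
    · intro x hx; rw [interior_Ioi] at hx
      rw [(hψderiv x hx).deriv]
      have hgx := hpos x hx
      have h2 := (hlieb x hx).2
      have hx' : x * g' x ≤ g₀ * g x := by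
        rw [div_le_iff₀ hgx] at h2; linarith
      have hxe : x ^ (-g₀) = x ^ (-g₀ - 1) * x := by
        rw [← Real.rpow_add_one hx.ne' (-g₀ - 1)]; ring_nf
      have hp : (0:ℝ) < x ^ (-g₀ - 1) := Real.rpow_pos_of_pos hx _
      rw [hxe]
      nlinarith [mul_nonneg hp.le (sub_nonneg.mpr hx')]
  -- key comparison inequality
  have hkey : ∀ s t : ℝ, 0 < s → s ≤ t → g t * s ^ g₀ ≤ g s * t ^ g₀ := by
    intro s t hs hst
    have ht : 0 < t := lt_of_lt_of_le hs hst
    have h := hψanti (Set.mem_Ioi.mpr hs) (Set.mem_Ioi.mpr ht) hst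
    have hsp : (0:ℝ) < s ^ g₀ := Real.rpow_pos_of_pos hs _
    have htp : (0:ℝ) < t ^ g₀ := Real.rpow_pos_of_pos ht _
    have hs' : s ^ (-g₀) * s ^ g₀ = 1 := by
      rw [← Real.rpow_add hs]; simp
    have ht' : t ^ (-g₀) * t ^ g₀ = 1 := by
      rw [← Real.rpow_add ht]; simp
    have hmul := mul_le_mul_of_nonneg_right h (mul_pos hsp htp).le
    have e1 : g t * t ^ (-g₀) * (s ^ g₀ * t ^ g₀) = g t * s ^ g₀ := by
      linear_combination (g t * s ^ g₀) * ht'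
    have e2 : g s * s ^ (-g₀) * (s ^ g₀ * t ^ g₀) = g s * t ^ g₀ := by
      linear_combination (g s * t ^ g₀) * hs'
    calc g t * s ^ g₀ = g t * t ^ (-g₀) * (s ^ g₀ * t ^ g₀) := e1.symm
      _ ≤ g s * s ^ (-g₀) * (s ^ g₀ * t ^ g₀) := hmul
      _ = g s * t ^ g₀ := e2
  -- interval integrability
  have hint : ∀ u v : ℝ, 0 ≤ u → u ≤ v → 0 < v → IntervalIntegrable g volume u v := by
    intro u v hu huv hv
    rw [intervalIntegrable_iff_integrableOn_Ioc_of_le huv]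
    have hcont : ContinuousOn g (Set.Ioc u v) := fun x hx =>
      (hderiv x (lt_of_le_of_lt hu hx.1)).continuousAt.continuousWithinAt
    refine ⟨hcont.aestronglyMeasurable measurableSet_Ioc, ?_⟩
    apply MeasureTheory.HasFiniteIntegral.restrict_of_bounded (C := g v) measure_Ioc_lt_top
    refine MeasureTheory.ae_restrict_of_forall_mem measurableSet_Ioc ?_
    intro x hx
    have hx0 : 0 < x := lt_of_le_of_lt hu hx.1
    rw [Real.norm_eq_abs, abs_of_pos (hpos x hx0)]
    exact hmono (Set.mem_Ioi.mpr hx0) (Set.mem_Ioi.mpr hv) hx.2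
  -- lower bound on G
  have hGlb : ∀ s : ℝ, 0 < s → s / 2 * g (s / 2) ≤ G s := by
    intro s hs
    have hs2 : 0 < s / 2 := by linarith
    have hi1 : IntervalIntegrable g volume 0 (s / 2) := hint 0 (s / 2) le_rfl hs2.le hs2
    have hi2 : IntervalIntegrable g volume (s / 2) s := hint (s / 2) s hs2.le (by linarith) hs
    rw [hG, ← intervalIntegral.integral_add_adjacent_intervals hi1 hi2]
    have h1 : 0 ≤ ∫ τ in (0:ℝ)..(s / 2), g τ := by
      rw [intervalIntegral.integral_of_le hs2.le]
      apply MeasureTheory.setIntegral_nonneg measurableSet_Ioc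
      intro x hx; exact (hpos x hx.1).le
    have h2 : s / 2 * g (s / 2) ≤ ∫ τ in (s / 2)..s, g τ := by
      have hm : ∀ x ∈ Set.Icc (s / 2) s, g (s / 2) ≤ g x := by
        intro x hx
        exact hmono (Set.mem_Ioi.mpr hs2) (Set.mem_Ioi.mpr (lt_of_lt_of_le hs2 hx.1)) hx.1
      calc s / 2 * g (s / 2) = ∫ _ in (s / 2)..s, g (s / 2) := by
            rw [intervalIntegral.integral_const, smul_eq_mul]; ring_nf
        _ ≤ ∫ τ in (s / 2)..s, g τ :=
            intervalIntegral.integral_mono_on (by linarith) intervalIntegrable_const hi2 hm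
    linarith
  -- the constant
  have hK : 0 < g C₀ := hpos C₀ hC₀
  have h2g : (0:ℝ) < 2 ^ (g₀ + 1) := Real.rpow_pos_of_pos two_pos _
  have hCp : (0:ℝ) < C₀ ^ g₀ := Real.rpow_pos_of_pos hC₀ _
  refine ⟨g C₀ / (2 ^ (g₀ + 1) * C₀ ^ g₀), by positivity, ?_⟩
  intro a b ha hba hne
  have hs : 0 < ‖b - a‖ := norm_pos_iff.mpr (sub_ne_zero.mpr hne)
  set s := ‖b - a‖ with hsdef
  have hs2 : 0 < s / 2 := by linarith
  have hsg : (0:ℝ) < s ^ g₀ := Real.rpow_pos_of_pos hs _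
  have h2gp : (0:ℝ) < (2:ℝ) ^ g₀ := Real.rpow_pos_of_pos two_pos _
  have e1 : s ^ (g₀ + 1) = s ^ g₀ * s := by
    rw [Real.rpow_add hs, Real.rpow_one]
  have e3 : (2:ℝ) ^ (g₀ + 1) = 2 ^ g₀ * 2 := by
    rw [Real.rpow_add two_pos, Real.rpow_one]
  constructor
  · -- case ‖b-a‖ > 2‖a‖
    intro _
    have hs2C : s / 2 ≤ C₀ := by linarith
    have key := hkey (s / 2) C₀ hs2 hs2C
    have e2 : (s / 2) ^ g₀ = s ^ g₀ / 2 ^ g₀ :=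
      Real.div_rpow hs.le (by norm_num : (0:ℝ) ≤ 2) g₀
    have step : g C₀ / (2 ^ (g₀ + 1) * C₀ ^ g₀) * s ^ (g₀ + 1)
        = s / 2 * (g C₀ * (s / 2) ^ g₀ / C₀ ^ g₀) := by
      rw [e1, e2, e3]; field_simp
    have step2 : s / 2 * (g C₀ * (s / 2) ^ g₀ / C₀ ^ g₀) ≤ s / 2 * g (s / 2) := by
      apply mul_le_mul_of_nonneg_left _ hs2.le
      rw [div_le_iff₀ hCp]; exact key
    calc g C₀ / (2 ^ (g₀ + 1) * C₀ ^ g₀) * s ^ (g₀ + 1)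
        = s / 2 * (g C₀ * (s / 2) ^ g₀ / C₀ ^ g₀) := step
      _ ≤ s / 2 * g (s / 2) := step2
      _ ≤ G s := hGlb s hs
  · -- case ‖b-a‖ ≤ 2‖a‖
    intro hcase
    have ht : 0 < ‖a‖ := by linarith
    set t := ‖a‖ with htdef
    have key2 := hkey t C₀ ht ha
    have hgt : g C₀ * t ^ g₀ / C₀ ^ g₀ ≤ g t := (div_le_iff₀ hCp).mpr key2
    have htg : (s / 2) ^ (g₀ - 1) ≤ t ^ (g₀ - 1) :=
      Real.rpow_le_rpow hs2.le (by linarith) (by linarith)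
    have h2e : (2:ℝ) ^ (g₀ - 1) ≤ 2 ^ (g₀ + 1) :=
      Real.rpow_le_rpow_of_exponent_le one_le_two (by linarith)
    have h2m : (0:ℝ) < (2:ℝ) ^ (g₀ - 1) := Real.rpow_pos_of_pos two_pos _
    have e4 : (s / 2) ^ (g₀ - 1) * s ^ 2 = s ^ (g₀ + 1) / 2 ^ (g₀ - 1) := by
      rw [Real.div_rpow hs.le (by norm_num : (0:ℝ) ≤ 2) (g₀ - 1)]
      rw [show s ^ (2:ℕ) = s ^ ((2:ℕ):ℝ) from (Real.rpow_natCast s 2).symm]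
      rw [div_mul_eq_mul_div, ← Real.rpow_add hs]
      congr 1
      push_cast
      ring
    have e5 : t ^ (g₀ - 1) * t = t ^ g₀ := by
      rw [← Real.rpow_add_one ht.ne' (g₀ - 1)]; ring_nf
    have hsp : (0:ℝ) < s ^ (g₀ + 1) := Real.rpow_pos_of_pos hs _
    calc g C₀ / (2 ^ (g₀ + 1) * C₀ ^ g₀) * s ^ (g₀ + 1)
        ≤ g C₀ / (2 ^ (g₀ - 1) * C₀ ^ g₀) * s ^ (g₀ + 1) := by
          gcongr
      _ = g C₀ * ((s / 2) ^ (g₀ - 1) * s ^ 2) / C₀ ^ g₀ := by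
          rw [e4]; field_simp
      _ ≤ g C₀ * (t ^ (g₀ - 1) * s ^ 2) / C₀ ^ g₀ := by
          gcongr
      _ = (g C₀ * t ^ g₀ / C₀ ^ g₀) / t * s ^ 2 := by
          rw [← e5]; field_simp
      _ ≤ g t / t * s ^ 2 := by
          gcongr
end
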